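/- Let k ≥ 2 be even, and in S_{2k−1} let σ = (1 2 … k) and τ = (k k+1 … 2k−1). Then every permutation of {1, …, 2k−1} that fixes each of the points k+1, k+2, …, 2k−1 lies in the subgroup generated by {σ, τ}; that is, ⟨σ, τ⟩ contains the subsymmetric group on {1, 2, …, k}. -/

import Mathlib

set_option maxHeartbeats 1000000

open Equiv Equiv.Perm List

private def s3σ (k : ℕ) : Equiv.Perm (Fin (2*k-1)) := ((List.finRange (2 * k - 1)).take k).formPerm
private def s3τ (k : ℕ) : Equiv.Perm (Fin (2*k-1)) :=
  ((List.finRange (2 * k - 1)).drop (k-1)).formPerm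
private def s3Q (k : ℕ) (hk : 2 ≤ k) (a b : Fin (2*k-1)) : Equiv.Perm (Fin (2*k-1)) :=
  Equiv.swap a ⟨k, by omega⟩ * Equiv.swap b ⟨k, by omega⟩
private def s3c (k m : ℕ) : Equiv.Perm (Fin (2*k-1)) :=
  ((((List.finRange (2*k-1)).take (m+1))).drop 1).formPerm

private lemma stmt3_sigma_apply (k : ℕ) (hk : 2 ≤ k) (j : ℕ) (hj : j < k) :
    ((List.finRange (2 * k - 1)).take k).formPerm ⟨j, by omega⟩ =
      ⟨(j + 1) % k, by have := Nat.mod_lt (j+1) (show 0 < k by omega); omega⟩ := by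
  have hnd : ((List.finRange (2 * k - 1)).take k).Nodup :=
    (List.take_sublist _ _).nodup (List.nodup_finRange _)
  have hlen : ((List.finRange (2 * k - 1)).take k).length = k := by
    simp [List.length_take]; omega
  have hget : ∀ i (hi : i < k),
      ((List.finRange (2 * k - 1)).take k)[i]'(by omega) = (⟨i, by omega⟩ : Fin (2*k-1)) := by
    intro i hi
    rw [List.getElem_take, List.getElem_finRange]
    rfl
  have := List.formPerm_apply_getElem _ hnd j (by omega)
  rw [hget j hj] at this
  rw [this]
  have h2 : (j + 1) % ((List.finRange (2 * k - 1)).take k).length = (j+1) % k := by rw [hlen]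
  simp only [hlen]
  exact hget _ (Nat.mod_lt _ (by omega))

private lemma stmt3_sigma_fix (k : ℕ) (hk : 2 ≤ k) (x : Fin (2 * k - 1)) (hx : k ≤ x.val) :
    ((List.finRange (2 * k - 1)).take k).formPerm x = x := by
  apply List.formPerm_apply_of_notMem
  intro hmem
  rw [List.mem_iff_getElem] at hmem
  obtain ⟨i, hi, hix⟩ := hmem
  rw [List.getElem_take, List.getElem_finRange] at hix
  have hlen : ((List.finRange (2 * k - 1)).take k).length = k := by
    simp [List.length_take]; omega
  have : i = x.val := congrArg Fin.val hix
  omega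

private lemma stmt3_tau_apply (k : ℕ) (hk : 2 ≤ k) (i : ℕ) (hi : i < k) :
    ((List.finRange (2 * k - 1)).drop (k - 1)).formPerm ⟨k - 1 + i, by omega⟩ =
      ⟨k - 1 + (i + 1) % k, by have := Nat.mod_lt (i+1) (show 0 < k by omega); omega⟩ := by
  have hnd : ((List.finRange (2 * k - 1)).drop (k - 1)).Nodup :=
    (List.drop_sublist _ _).nodup (List.nodup_finRange _)
  have hlen : ((List.finRange (2 * k - 1)).drop (k - 1)).length = k := by
    simp [List.length_drop]; omega
  have hget : ∀ i (hi : i < k),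
      ((List.finRange (2 * k - 1)).drop (k - 1))[i]'(by omega) =
        (⟨k - 1 + i, by omega⟩ : Fin (2*k-1)) := by
    intro i hi
    rw [List.getElem_drop, List.getElem_finRange]
    rfl
  have := List.formPerm_apply_getElem _ hnd i (by omega)
  rw [hget i hi] at this
  rw [this]
  simp only [hlen]
  exact hget _ (Nat.mod_lt _ (by omega))

private lemma stmt3_tau_fix (k : ℕ) (hk : 2 ≤ k) (x : Fin (2 * k - 1)) (hx : x.val < k - 1) :
    ((List.finRange (2 * k - 1)).drop (k - 1)).formPerm x = x := by
  apply List.formPerm_apply_of_notMem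
  intro hmem
  rw [List.mem_iff_getElem] at hmem
  obtain ⟨i, hi, hix⟩ := hmem
  rw [List.getElem_drop, List.getElem_finRange] at hix
  have : k - 1 + i = x.val := congrArg Fin.val hix
  omega

private lemma s3σ_mid (k : ℕ) (hk : 2 ≤ k) (j : ℕ) (h : j + 1 < k) (h1 : j < 2*k-1)
    (h2 : j + 1 < 2*k-1) : s3σ k ⟨j, h1⟩ = ⟨j+1, h2⟩ := by
  unfold s3σ
  have := stmt3_sigma_apply k hk j (by omega)
  rw [Fin.ext_iff] at this ⊢
  rw [this]
  show (j+1) % k = j + 1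
  rw [Nat.mod_eq_of_lt h]

private lemma s3σ_last (k : ℕ) (hk : 2 ≤ k) (h1 : k - 1 < 2*k-1) (h2 : 0 < 2*k-1) :
    s3σ k ⟨k-1, h1⟩ = ⟨0, h2⟩ := by
  unfold s3σ
  have := stmt3_sigma_apply k hk (k-1) (by omega)
  rw [Fin.ext_iff] at this ⊢
  rw [this]
  show (k-1+1) % k = 0
  rw [show k - 1 + 1 = k by omega, Nat.mod_self]

private lemma s3σ_fix (k : ℕ) (hk : 2 ≤ k) (j : ℕ) (h1 : j < 2*k-1) (hx : k ≤ j) :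
    s3σ k ⟨j, h1⟩ = ⟨j, h1⟩ := stmt3_sigma_fix k hk ⟨j, h1⟩ hx

private lemma s3τ_mid (k : ℕ) (hk : 2 ≤ k) (j : ℕ) (h : k - 1 ≤ j) (h' : j + 1 < 2*k-1)
    (h1 : j < 2*k-1) : s3τ k ⟨j, h1⟩ = ⟨j+1, h'⟩ := by
  unfold s3τ
  have := stmt3_tau_apply k hk (j - (k-1)) (by omega)
  rw [Fin.ext_iff] at this ⊢
  rw [show (⟨j, h1⟩ : Fin (2*k-1)) = ⟨k - 1 + (j - (k-1)), by omega⟩ from by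
    rw [Fin.ext_iff]; show j = k - 1 + (j - (k-1)); omega]
  rw [this]
  show k - 1 + (j - (k-1) + 1) % k = j + 1
  rw [Nat.mod_eq_of_lt (show j - (k-1) + 1 < k by omega)]
  omega

private lemma s3τ_last (k : ℕ) (hk : 2 ≤ k) (h1 : 2*k-2 < 2*k-1) (h2 : k - 1 < 2*k-1) :
    s3τ k ⟨2*k-2, h1⟩ = ⟨k-1, h2⟩ := by
  unfold s3τ
  have := stmt3_tau_apply k hk (k-1) (by omega)
  rw [Fin.ext_iff] at this ⊢
  rw [show (⟨2*k-2, h1⟩ : Fin (2*k-1)) = ⟨k - 1 + (k-1), by omega⟩ from by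
    rw [Fin.ext_iff]; show 2*k-2 = k - 1 + (k-1); omega]
  rw [this]
  show k - 1 + (k - 1 + 1) % k = k - 1
  rw [show k - 1 + 1 = k by omega, Nat.mod_self]
  omega

private lemma s3τ_fix (k : ℕ) (hk : 2 ≤ k) (j : ℕ) (h1 : j < 2*k-1) (hx : j < k - 1) :
    s3τ k ⟨j, h1⟩ = ⟨j, h1⟩ := stmt3_tau_fix k hk ⟨j, h1⟩ hx

private lemma stmt3_key (k : ℕ) (hk : 2 ≤ k) :
    s3τ k * s3σ k =
      (Equiv.swap (⟨k-1, by omega⟩ : Fin (2*k-1)) ⟨k, by omega⟩ *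
        Equiv.swap (⟨0, by omega⟩ : Fin (2*k-1)) ⟨k, by omega⟩) * (s3σ k * s3τ k) := by
  ext x
  obtain ⟨v, hv⟩ := x
  simp only [Equiv.Perm.mul_apply]
  have hcase : v < k-2 ∨ v = k-2 ∨ v = k-1 ∨ (k ≤ v ∧ v < 2*k-2) ∨ v = 2*k-2 := by omega
  rcases hcase with h | h | h | ⟨h, h'⟩ | h
  · -- v < k-2 : LHS τ(σ v)=v+1 ; RHS swaps(σ(τ v)) = v+1
    rw [s3σ_mid k hk v (by omega) _ (by omega), s3τ_fix k hk (v+1) _ (by omega),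
        s3τ_fix k hk v _ (by omega), s3σ_mid k hk v (by omega) _ (by omega)]
    simp only [Equiv.swap_apply_def]
    split_ifs <;> simp only [Fin.mk.injEq, Fin.val_mk, not_true, not_false_eq_true] at * <;> omega
  · subst h
    rw [s3σ_mid k hk (k-2) (by omega) _ (by omega),
        s3τ_mid k hk (k-2+1) (by omega) (by omega),
        s3τ_fix k hk (k-2) _ (by omega),
        s3σ_mid k hk (k-2) (by omega) _ (by omega)]
    simp only [Equiv.swap_apply_def]
    split_ifs <;> simp only [Fin.mk.injEq, Fin.val_mk, not_true, not_false_eq_true] at * <;> omega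
  · subst h
    rw [s3σ_last k hk (by omega) (by omega), s3τ_fix k hk 0 _ (by omega),
        s3τ_mid k hk (k-1) (by omega) (by omega),
        s3σ_fix k hk (k-1+1) _ (by omega)]
    simp only [Equiv.swap_apply_def]
    split_ifs <;> simp only [Fin.mk.injEq, Fin.val_mk, not_true, not_false_eq_true] at * <;> omega
  · rw [s3σ_fix k hk v _ (by omega), s3τ_mid k hk v (by omega) (by omega),
        s3σ_fix k hk (v+1) _ (by omega)]
    simp only [Equiv.swap_apply_def]
    split_ifs <;> simp only [Fin.mk.injEq, Fin.val_mk, not_true, not_false_eq_true] at * <;> omega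
  · subst h
    rw [s3σ_fix k hk (2*k-2) _ (by omega), s3τ_last k hk (by omega) (by omega), s3σ_last k hk (by omega) (by omega)]
    simp only [Equiv.swap_apply_def]
    split_ifs <;> simp only [Fin.mk.injEq, Fin.val_mk, not_true, not_false_eq_true] at * <;> omega

private lemma s3Q_mul (k : ℕ) (hk : 2 ≤ k) (a b c : Fin (2*k-1)) :
    s3Q k hk a b * s3Q k hk b c = s3Q k hk a c := by
  unfold s3Q
  rw [mul_assoc, ← mul_assoc (Equiv.swap b _), Equiv.swap_mul_self, one_mul]

private lemma s3Q_inv (k : ℕ) (hk : 2 ≤ k) (a b : Fin (2*k-1)) :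
    (s3Q k hk a b)⁻¹ = s3Q k hk b a := by
  unfold s3Q
  rw [mul_inv_rev, Equiv.swap_inv, Equiv.swap_inv]

private lemma s3Q_conj (k : ℕ) (hk : 2 ≤ k) (a b : Fin (2*k-1)) :
    s3σ k * s3Q k hk a b * (s3σ k)⁻¹ = s3Q k hk (s3σ k a) (s3σ k b) := by
  unfold s3Q
  have hfix : s3σ k (⟨k, by omega⟩ : Fin (2*k-1)) = ⟨k, by omega⟩ := s3σ_fix k hk k _ le_rfl
  have h1 : ∀ a : Fin (2*k-1), Equiv.swap (s3σ k a) (⟨k, by omega⟩ : Fin (2*k-1)) =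
      s3σ k * Equiv.swap a ⟨k, by omega⟩ * (s3σ k)⁻¹ := by
    intro a
    nth_rewrite 1 [← hfix]
    rw [Equiv.swap_apply_apply]
  rw [h1, h1]
  group

private lemma s3_mem_σ (k : ℕ) (hk : 2 ≤ k) :
    s3σ k ∈ Subgroup.closure {s3σ k, s3τ k} :=
  Subgroup.subset_closure (by simp)

private lemma s3_mem_τ (k : ℕ) (hk : 2 ≤ k) :
    s3τ k ∈ Subgroup.closure {s3σ k, s3τ k} :=
  Subgroup.subset_closure (by simp)

private lemma s3_mem_Qbase (k : ℕ) (hk : 2 ≤ k) :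
    s3Q k hk ⟨k-1, by omega⟩ ⟨0, by omega⟩ ∈ Subgroup.closure {s3σ k, s3τ k} := by
  have hkey := stmt3_key k hk
  have : s3Q k hk ⟨k-1, by omega⟩ ⟨0, by omega⟩ = (s3τ k * s3σ k) * (s3σ k * s3τ k)⁻¹ := by
    unfold s3Q; rw [hkey]; group
  rw [this]
  exact Subgroup.mul_mem _ (Subgroup.mul_mem _ (s3_mem_τ k hk) (s3_mem_σ k hk))
    (Subgroup.inv_mem _ (Subgroup.mul_mem _ (s3_mem_σ k hk) (s3_mem_τ k hk)))

private lemma s3_mem_Qadj (k : ℕ) (hk : 2 ≤ k) (j : ℕ) (hj : j + 1 < k) :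
    s3Q k hk ⟨j, by omega⟩ ⟨j+1, by omega⟩ ∈ Subgroup.closure {s3σ k, s3τ k} := by
  induction j with
  | zero =>
    have h := s3Q_conj k hk ⟨k-1, by omega⟩ ⟨0, by omega⟩
    rw [s3σ_last k hk (by omega) (by omega), s3σ_mid k hk 0 (by omega) (by omega) (by omega)] at h
    rw [← h]
    exact Subgroup.mul_mem _ (Subgroup.mul_mem _ (s3_mem_σ k hk) (s3_mem_Qbase k hk))
      (Subgroup.inv_mem _ (s3_mem_σ k hk))
  | succ i ih =>
    have h := s3Q_conj k hk ⟨i, by omega⟩ ⟨i+1, by omega⟩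
    rw [s3σ_mid k hk i (by omega) (by omega) (by omega), s3σ_mid k hk (i+1) (by omega) (by omega) (by omega)] at h
    rw [← h]
    exact Subgroup.mul_mem _ (Subgroup.mul_mem _ (s3_mem_σ k hk) (ih (by omega)))
      (Subgroup.inv_mem _ (s3_mem_σ k hk))

private lemma s3_mem_Q0 (k : ℕ) (hk : 2 ≤ k) (j : ℕ) (hj : j < k) :
    s3Q k hk ⟨j, by omega⟩ ⟨0, by omega⟩ ∈ Subgroup.closure {s3σ k, s3τ k} := by
  induction j with
  | zero =>
    have : s3Q k hk ⟨0, by omega⟩ ⟨0, by omega⟩ = 1 := by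
      unfold s3Q; rw [Equiv.swap_mul_self]
    rw [this]; exact Subgroup.one_mem _
  | succ i ih =>
    have h : s3Q k hk ⟨i+1, by omega⟩ ⟨0, by omega⟩ =
        (s3Q k hk ⟨i, by omega⟩ ⟨i+1, by omega⟩)⁻¹ * s3Q k hk ⟨i, by omega⟩ ⟨0, by omega⟩ := by
      rw [s3Q_inv, s3Q_mul]
    rw [h]
    exact Subgroup.mul_mem _ (Subgroup.inv_mem _ (s3_mem_Qadj k hk i (by omega)))
      (ih (by omega))

private lemma s3_mem_Q (k : ℕ) (hk : 2 ≤ k) (a b : Fin (2*k-1)) (ha : a.val < k)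
    (hb : b.val < k) : s3Q k hk a b ∈ Subgroup.closure {s3σ k, s3τ k} := by
  have h : s3Q k hk a b = s3Q k hk a ⟨0, by omega⟩ * (s3Q k hk b ⟨0, by omega⟩)⁻¹ := by
    rw [s3Q_inv, s3Q_mul]
  rw [h]
  have ha' : a = ⟨a.val, a.isLt⟩ := rfl
  have hb' : b = ⟨b.val, b.isLt⟩ := rfl
  rw [ha', hb']
  exact Subgroup.mul_mem _ (s3_mem_Q0 k hk a.val ha)
    (Subgroup.inv_mem _ (s3_mem_Q0 k hk b.val hb))

-- list facts
private lemma s3c_nodup (k m : ℕ) : ((((List.finRange (2*k-1)).take (m+1))).drop 1).Nodup :=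
  ((List.drop_sublist _ _).trans (List.take_sublist _ _)).nodup (List.nodup_finRange _)

private lemma s3c_length (k m : ℕ) (h : m + 1 ≤ 2*k-1) :
    ((((List.finRange (2*k-1)).take (m+1))).drop 1).length = m := by
  simp [List.length_drop, List.length_take]
  omega

private lemma s3c_get (k m : ℕ) (h : m + 1 ≤ 2*k-1) (i : ℕ) (hi : i < m) :
    ((((List.finRange (2*k-1)).take (m+1))).drop 1)[i]'(by rw [s3c_length k m h]; omega) =
      (⟨1+i, by omega⟩ : Fin (2*k-1)) := by
  rw [List.getElem_drop, List.getElem_take, List.getElem_finRange]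
  rfl

private lemma s3c_mid (k m : ℕ) (hm : m + 1 ≤ 2*k-1) (j : ℕ) (h1 : 1 ≤ j) (h2 : j < m)
    (hj : j < 2*k-1) (hj2 : j + 1 < 2*k-1) : s3c k m ⟨j, hj⟩ = ⟨j+1, hj2⟩ := by
  unfold s3c
  have hg := s3c_get k m hm (j-1) (by omega)
  have := List.formPerm_apply_getElem _ (s3c_nodup k m) (j-1)
    (by rw [s3c_length k m hm]; omega)
  rw [hg] at this
  rw [show (⟨j, hj⟩ : Fin (2*k-1)) = ⟨1+(j-1), by omega⟩ from by
    rw [Fin.ext_iff]; show j = 1 + (j-1); omega]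
  rw [this, Fin.ext_iff]
  have hmod : (j - 1 + 1) % ((((List.finRange (2*k-1)).take (m+1))).drop 1).length = j % m := by
    rw [s3c_length k m hm]; congr 1; omega
  -- rewrite index
  have hj' : j % m = j := Nat.mod_eq_of_lt h2
  rw [List.getElem_drop, List.getElem_take, List.getElem_finRange]
  show 1 + (j - 1 + 1) % _ = j + 1
  rw [s3c_length k m hm, show j - 1 + 1 = j by omega, hj']
  omega

private lemma s3c_last (k m : ℕ) (hm : m + 1 ≤ 2*k-1) (h1 : 1 ≤ m)
    (hj : m < 2*k-1) (hj2 : 1 < 2*k-1) : s3c k m ⟨m, hj⟩ = ⟨1, hj2⟩ := by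
  unfold s3c
  have hg := s3c_get k m hm (m-1) (by omega)
  have := List.formPerm_apply_getElem _ (s3c_nodup k m) (m-1)
    (by rw [s3c_length k m hm]; omega)
  rw [hg] at this
  rw [show (⟨m, hj⟩ : Fin (2*k-1)) = ⟨1+(m-1), by omega⟩ from by
    rw [Fin.ext_iff]; show m = 1 + (m-1); omega]
  rw [this, Fin.ext_iff]
  rw [List.getElem_drop, List.getElem_take, List.getElem_finRange]
  show 1 + (m - 1 + 1) % _ = 1
  rw [s3c_length k m hm, show m - 1 + 1 = m by omega, Nat.mod_self]

private lemma s3c_fix (k m : ℕ) (hm : m + 1 ≤ 2*k-1) (j : ℕ) (hj : j < 2*k-1)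
    (h : j = 0 ∨ m < j) : s3c k m ⟨j, hj⟩ = ⟨j, hj⟩ := by
  unfold s3c
  apply List.formPerm_apply_of_notMem
  intro hmem
  rw [List.mem_iff_getElem] at hmem
  obtain ⟨i, hi, hix⟩ := hmem
  rw [s3c_length k m hm] at hi
  rw [s3c_get k m hm i hi] at hix
  have : 1 + i = j := congrArg Fin.val hix
  omega

private lemma s3c_rec (k : ℕ) (hk : 2 ≤ k) (m : ℕ) (h1 : 1 ≤ m) (h2 : m + 2 ≤ k - 1) :
    s3c k (m+2) = s3c k m *
      (s3Q k hk ⟨m+1, by omega⟩ ⟨m, by omega⟩ * s3Q k hk ⟨m+2, by omega⟩ ⟨m+1, by omega⟩) := by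
  unfold s3Q
  ext x
  obtain ⟨v, hv⟩ := x
  simp only [Equiv.Perm.mul_apply]
  have hcase : (v = 0 ∨ (m+2 < v ∧ v ≠ k)) ∨ (1 ≤ v ∧ v < m) ∨ v = m ∨ v = m+1 ∨ v = m+2
      ∨ v = k := by omega
  rcases hcase with h | ⟨hb1, hb2⟩ | h | h | h | h
  · rw [s3c_fix k (m+2) (by omega) v hv (by omega),
        Equiv.swap_apply_of_ne_of_ne
          (show (⟨v, hv⟩ : Fin (2*k-1)) ≠ ⟨m+1, by omega⟩ by
            simp only [ne_eq, Fin.mk.injEq]; omega)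
          (show (⟨v, hv⟩ : Fin (2*k-1)) ≠ ⟨k, by omega⟩ by
            simp only [ne_eq, Fin.mk.injEq]; omega),
        Equiv.swap_apply_of_ne_of_ne
          (show (⟨v, hv⟩ : Fin (2*k-1)) ≠ ⟨m+2, by omega⟩ by
            simp only [ne_eq, Fin.mk.injEq]; omega)
          (show (⟨v, hv⟩ : Fin (2*k-1)) ≠ ⟨k, by omega⟩ by
            simp only [ne_eq, Fin.mk.injEq]; omega),
        Equiv.swap_apply_of_ne_of_ne
          (show (⟨v, hv⟩ : Fin (2*k-1)) ≠ ⟨m, by omega⟩ by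
            simp only [ne_eq, Fin.mk.injEq]; omega)
          (show (⟨v, hv⟩ : Fin (2*k-1)) ≠ ⟨k, by omega⟩ by
            simp only [ne_eq, Fin.mk.injEq]; omega),
        Equiv.swap_apply_of_ne_of_ne
          (show (⟨v, hv⟩ : Fin (2*k-1)) ≠ ⟨m+1, by omega⟩ by
            simp only [ne_eq, Fin.mk.injEq]; omega)
          (show (⟨v, hv⟩ : Fin (2*k-1)) ≠ ⟨k, by omega⟩ by
            simp only [ne_eq, Fin.mk.injEq]; omega),
        s3c_fix k m (by omega) v hv (by omega)]
  · rw [s3c_mid k (m+2) (by omega) v hb1 (by omega) hv (by omega),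
        Equiv.swap_apply_of_ne_of_ne
          (show (⟨v, hv⟩ : Fin (2*k-1)) ≠ ⟨m+1, by omega⟩ by
            simp only [ne_eq, Fin.mk.injEq]; omega)
          (show (⟨v, hv⟩ : Fin (2*k-1)) ≠ ⟨k, by omega⟩ by
            simp only [ne_eq, Fin.mk.injEq]; omega),
        Equiv.swap_apply_of_ne_of_ne
          (show (⟨v, hv⟩ : Fin (2*k-1)) ≠ ⟨m+2, by omega⟩ by
            simp only [ne_eq, Fin.mk.injEq]; omega)
          (show (⟨v, hv⟩ : Fin (2*k-1)) ≠ ⟨k, by omega⟩ by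
            simp only [ne_eq, Fin.mk.injEq]; omega),
        Equiv.swap_apply_of_ne_of_ne
          (show (⟨v, hv⟩ : Fin (2*k-1)) ≠ ⟨m, by omega⟩ by
            simp only [ne_eq, Fin.mk.injEq]; omega)
          (show (⟨v, hv⟩ : Fin (2*k-1)) ≠ ⟨k, by omega⟩ by
            simp only [ne_eq, Fin.mk.injEq]; omega),
        Equiv.swap_apply_of_ne_of_ne
          (show (⟨v, hv⟩ : Fin (2*k-1)) ≠ ⟨m+1, by omega⟩ by
            simp only [ne_eq, Fin.mk.injEq]; omega)
          (show (⟨v, hv⟩ : Fin (2*k-1)) ≠ ⟨k, by omega⟩ by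
            simp only [ne_eq, Fin.mk.injEq]; omega),
        s3c_mid k m (by omega) v hb1 hb2 hv (by omega)]
  · rw [show (⟨v, hv⟩ : Fin (2*k-1)) = ⟨m, by omega⟩ from by rw [Fin.ext_iff]; exact h]
    rw [s3c_mid k (m+2) (by omega) m h1 (by omega) (by omega) (by omega),
        Equiv.swap_apply_of_ne_of_ne
          (show (⟨m, by omega⟩ : Fin (2*k-1)) ≠ ⟨m+1, by omega⟩ by
            simp only [ne_eq, Fin.mk.injEq]; omega)
          (show (⟨m, by omega⟩ : Fin (2*k-1)) ≠ ⟨k, by omega⟩ by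
            simp only [ne_eq, Fin.mk.injEq]; omega),
        Equiv.swap_apply_of_ne_of_ne
          (show (⟨m, by omega⟩ : Fin (2*k-1)) ≠ ⟨m+2, by omega⟩ by
            simp only [ne_eq, Fin.mk.injEq]; omega)
          (show (⟨m, by omega⟩ : Fin (2*k-1)) ≠ ⟨k, by omega⟩ by
            simp only [ne_eq, Fin.mk.injEq]; omega),
        Equiv.swap_apply_left,
        Equiv.swap_apply_right,
        s3c_fix k m (by omega) (m+1) (by omega) (by omega)]
    try simp only [Fin.mk.injEq]
  · rw [show (⟨v, hv⟩ : Fin (2*k-1)) = ⟨m+1, by omega⟩ from by rw [Fin.ext_iff]; exact h]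
    rw [s3c_mid k (m+2) (by omega) (m+1) (by omega) (by omega) (by omega) (by omega),
        Equiv.swap_apply_left,
        Equiv.swap_apply_right,
        Equiv.swap_apply_of_ne_of_ne
          (show (⟨m+2, by omega⟩ : Fin (2*k-1)) ≠ ⟨m, by omega⟩ by
            simp only [ne_eq, Fin.mk.injEq]; omega)
          (show (⟨m+2, by omega⟩ : Fin (2*k-1)) ≠ ⟨k, by omega⟩ by
            simp only [ne_eq, Fin.mk.injEq]; omega),
        Equiv.swap_apply_of_ne_of_ne
          (show (⟨m+2, by omega⟩ : Fin (2*k-1)) ≠ ⟨m+1, by omega⟩ by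
            simp only [ne_eq, Fin.mk.injEq]; omega)
          (show (⟨m+2, by omega⟩ : Fin (2*k-1)) ≠ ⟨k, by omega⟩ by
            simp only [ne_eq, Fin.mk.injEq]; omega),
        s3c_fix k m (by omega) (m+2) (by omega) (by omega)]
    try simp only [Fin.mk.injEq]
  · rw [show (⟨v, hv⟩ : Fin (2*k-1)) = ⟨m+2, by omega⟩ from by rw [Fin.ext_iff]; exact h]
    rw [s3c_last k (m+2) (by omega) (by omega) (by omega) (by omega),
        Equiv.swap_apply_of_ne_of_ne
          (show (⟨m+2, by omega⟩ : Fin (2*k-1)) ≠ ⟨m+1, by omega⟩ by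
            simp only [ne_eq, Fin.mk.injEq]; omega)
          (show (⟨m+2, by omega⟩ : Fin (2*k-1)) ≠ ⟨k, by omega⟩ by
            simp only [ne_eq, Fin.mk.injEq]; omega),
        Equiv.swap_apply_left,
        Equiv.swap_apply_right,
        Equiv.swap_apply_of_ne_of_ne
          (show (⟨m, by omega⟩ : Fin (2*k-1)) ≠ ⟨m+1, by omega⟩ by
            simp only [ne_eq, Fin.mk.injEq]; omega)
          (show (⟨m, by omega⟩ : Fin (2*k-1)) ≠ ⟨k, by omega⟩ by
            simp only [ne_eq, Fin.mk.injEq]; omega),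
        s3c_last k m (by omega) h1 (by omega) (by omega)]
  · rw [show (⟨v, hv⟩ : Fin (2*k-1)) = ⟨k, by omega⟩ from by rw [Fin.ext_iff]; exact h]
    rw [s3c_fix k (m+2) (by omega) k (by omega) (by omega),
        Equiv.swap_apply_right,
        Equiv.swap_apply_of_ne_of_ne
          (show (⟨m+1, by omega⟩ : Fin (2*k-1)) ≠ ⟨m+2, by omega⟩ by
            simp only [ne_eq, Fin.mk.injEq]; omega)
          (show (⟨m+1, by omega⟩ : Fin (2*k-1)) ≠ ⟨k, by omega⟩ by
            simp only [ne_eq, Fin.mk.injEq]; omega),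
        Equiv.swap_apply_of_ne_of_ne
          (show (⟨m+1, by omega⟩ : Fin (2*k-1)) ≠ ⟨m, by omega⟩ by
            simp only [ne_eq, Fin.mk.injEq]; omega)
          (show (⟨m+1, by omega⟩ : Fin (2*k-1)) ≠ ⟨k, by omega⟩ by
            simp only [ne_eq, Fin.mk.injEq]; omega),
        Equiv.swap_apply_left,
        s3c_fix k m (by omega) k (by omega) (by omega)]

private lemma s3c_one (k : ℕ) (hk : 2 ≤ k) : s3c k 1 = 1 := by
  ext x
  obtain ⟨v, hv⟩ := x
  rw [Equiv.Perm.one_apply]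
  rcases eq_or_ne v 1 with h | h
  · rw [show (⟨v, hv⟩ : Fin (2*k-1)) = ⟨1, by omega⟩ from by rw [Fin.ext_iff]; exact h]
    rw [show (1:ℕ) = 1 from rfl] at *
    have := s3c_last k 1 (by omega) le_rfl (by omega) (by omega)
    rw [this]
  · exact congrArg Fin.val (s3c_fix k 1 (by omega) v hv (by omega))

private lemma s3_mem_c (k : ℕ) (hk : 2 ≤ k) (m : ℕ) (hm : 2*m+1 ≤ k-1) :
    s3c k (2*m+1) ∈ Subgroup.closure {s3σ k, s3τ k} := by
  induction m with
  | zero => rw [show 2*0+1 = 1 by omega, s3c_one k hk]; exact Subgroup.one_mem _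
  | succ i ih =>
    have h : 2*(i+1)+1 = (2*i+1)+2 := by omega
    rw [h, s3c_rec k hk (2*i+1) (by omega) (by omega)]
    exact Subgroup.mul_mem _ (ih (by omega))
      (Subgroup.mul_mem _
        (s3_mem_Q k hk _ _ (by simp; omega) (by simp; omega))
        (s3_mem_Q k hk _ _ (by simp; omega) (by simp; omega)))

private lemma s3_swap01σ (k : ℕ) (hk : 2 ≤ k) :
    Equiv.swap (⟨0, by omega⟩ : Fin (2*k-1)) ⟨1, by omega⟩ * s3σ k = s3c k (k-1) := by
  ext x
  obtain ⟨v, hv⟩ := x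
  rw [Equiv.Perm.mul_apply]
  have hcase : v = 0 ∨ (1 ≤ v ∧ v ≤ k-2) ∨ v = k-1 ∨ k ≤ v := by omega
  rcases hcase with h | ⟨h1, h2⟩ | h | h
  · rw [show (⟨v, hv⟩ : Fin (2*k-1)) = ⟨0, by omega⟩ from by rw [Fin.ext_iff]; exact h]
    rw [s3σ_mid k hk 0 (by omega) (by omega) (by omega), Equiv.swap_apply_right,
        s3c_fix k (k-1) (by omega) 0 (by omega) (by omega)]
  · rw [s3σ_mid k hk v (by omega) hv (by omega),
        Equiv.swap_apply_of_ne_of_ne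
          (show (⟨v+1, by omega⟩ : Fin (2*k-1)) ≠ ⟨0, by omega⟩ by
            simp only [ne_eq, Fin.mk.injEq]; omega)
          (show (⟨v+1, by omega⟩ : Fin (2*k-1)) ≠ ⟨1, by omega⟩ by
            simp only [ne_eq, Fin.mk.injEq]; omega),
        s3c_mid k (k-1) (by omega) v h1 (by omega) hv (by omega)]
  · rw [show (⟨v, hv⟩ : Fin (2*k-1)) = ⟨k-1, by omega⟩ from by rw [Fin.ext_iff]; exact h]
    rw [s3σ_last k hk (by omega) (by omega), Equiv.swap_apply_left,
        s3c_last k (k-1) (by omega) (by omega) (by omega) (by omega)]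
  · rw [s3σ_fix k hk v hv h,
        Equiv.swap_apply_of_ne_of_ne
          (show (⟨v, hv⟩ : Fin (2*k-1)) ≠ ⟨0, by omega⟩ by
            simp only [ne_eq, Fin.mk.injEq]; omega)
          (show (⟨v, hv⟩ : Fin (2*k-1)) ≠ ⟨1, by omega⟩ by
            simp only [ne_eq, Fin.mk.injEq]; omega),
        s3c_fix k (k-1) (by omega) v hv (by omega)]

private lemma s3_mem_swap01 (k : ℕ) (hk : 2 ≤ k) (hkeven : Even k) :
    Equiv.swap (⟨0, by omega⟩ : Fin (2*k-1)) ⟨1, by omega⟩ ∈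
      Subgroup.closure {s3σ k, s3τ k} := by
  obtain ⟨t, ht⟩ := hkeven
  have h : Equiv.swap (⟨0, by omega⟩ : Fin (2*k-1)) ⟨1, by omega⟩ =
      (Equiv.swap (⟨0, by omega⟩ : Fin (2*k-1)) ⟨1, by omega⟩ * s3σ k) * (s3σ k)⁻¹ := by
    group
  rw [h, s3_swap01σ k hk]
  have hk1 : k - 1 = 2*(t-1)+1 := by omega
  rw [hk1]
  exact Subgroup.mul_mem _ (s3_mem_c k hk (t-1) (by omega))
    (Subgroup.inv_mem _ (s3_mem_σ k hk))

private lemma s3_mem_swap (k : ℕ) (hk : 2 ≤ k) (hkeven : Even k) (a b : Fin (2*k-1))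
    (ha : a.val < k) (hb : b.val < k) (hab : a ≠ b) :
    Equiv.swap a b ∈ Subgroup.closure {s3σ k, s3τ k} := by
  have hkpt : ((⟨k, by omega⟩ : Fin (2*k-1)) : ℕ) = k := rfl
  have hsw : ∀ (x y : Fin (2*k-1)), x.val < k → y.val < k → x ≠ y →
      Equiv.swap x y = Equiv.swap x ⟨k, by omega⟩ * Equiv.swap y ⟨k, by omega⟩ *
        Equiv.swap x ⟨k, by omega⟩ := by
    intro x y hx hy hxy
    have h := Equiv.swap_mul_swap_mul_swap
      (show y ≠ (⟨k, by omega⟩ : Fin (2*k-1)) by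
        intro hc; rw [Fin.ext_iff] at hc; omega)
      (show y ≠ x from hxy.symm)
    rw [Equiv.swap_comm (⟨k, by omega⟩ : Fin (2*k-1)) x] at h
    exact h.symm
  have hid : Equiv.swap a b =
      s3Q k hk a b * s3Q k hk a ⟨0, by omega⟩ * s3Q k hk ⟨1, by omega⟩ ⟨0, by omega⟩ *
        Equiv.swap (⟨0, by omega⟩ : Fin (2*k-1)) ⟨1, by omega⟩ := by
    rw [hsw a b ha hb hab,
        hsw ⟨0, by omega⟩ ⟨1, by omega⟩ (by show (0:ℕ) < k; omega) (by show (1:ℕ) < k; omega)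
          (by simp only [ne_eq, Fin.mk.injEq]; omega)]
    unfold s3Q
    simp only [mul_assoc, Equiv.swap_mul_self_mul, Equiv.swap_mul_self, one_mul, mul_one]
  rw [hid]
  exact Subgroup.mul_mem _
    (Subgroup.mul_mem _
      (Subgroup.mul_mem _ (s3_mem_Q k hk a b ha hb) (s3_mem_Q k hk a _ ha (by show (0:ℕ) < k; omega)))
      (s3_mem_Q k hk _ _ (by show (1:ℕ) < k; omega) (by show (0:ℕ) < k; omega)))
    (s3_mem_swap01 k hk hkeven)

private lemma s3_via_swap (k : ℕ) (hk : 2 ≤ k) (x y : Fin k) :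
    (Equiv.swap x y).viaEmbedding (Fin.castLEEmb (by omega : k ≤ 2*k-1)) =
      Equiv.swap (Fin.castLE (by omega : k ≤ 2*k-1) x) (Fin.castLE (by omega) y) := by
  set e := Fin.castLEEmb (by omega : k ≤ 2*k-1) with he
  ext z
  by_cases hz : z ∈ Set.range e
  · obtain ⟨a, rfl⟩ := hz
    rw [Equiv.Perm.viaEmbedding_apply]
    exact congrArg Fin.val ((Fin.castLE_injective _).swap_apply _ _ _).symm
  · rw [Equiv.Perm.viaEmbedding_apply_of_notMem _ _ _ hz]
    exact congrArg Fin.val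
      (Equiv.swap_apply_of_ne_of_ne (fun hc => hz ⟨x, hc.symm⟩) (fun hc => hz ⟨y, hc.symm⟩)).symm

private lemma s3_mem_via (k : ℕ) (hk : 2 ≤ k) (hkeven : Even k) (g : Equiv.Perm (Fin k)) :
    g.viaEmbedding (Fin.castLEEmb (by omega : k ≤ 2*k-1)) ∈
      Subgroup.closure {s3σ k, s3τ k} := by
  refine Equiv.Perm.swap_induction_on g ?_ ?_
  · rw [← Equiv.Perm.viaEmbeddingHom_apply, map_one]
    exact Subgroup.one_mem _
  · intro f x y hxy ih
    rw [← Equiv.Perm.viaEmbeddingHom_apply, map_mul,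
        Equiv.Perm.viaEmbeddingHom_apply, Equiv.Perm.viaEmbeddingHom_apply,
        s3_via_swap k hk]
    exact Subgroup.mul_mem _
      (s3_mem_swap k hk hkeven _ _ (by simpa using x.isLt) (by simpa using y.isLt)
        (fun hc => hxy (Fin.castLE_injective _ hc)))
      ih

/-- For even `k ≥ 2`, with `σ = (1 2 … k)` and `τ = (k k+1 … 2k−1)`
in `S_{2k−1}` (0-indexed: `σ` is the cycle on indices `0,…,k-1` and `τ` the cycle
on indices `k-1,…,2k-2`), every permutation fixing each of the last `k-1` points
(0-indexed: all points with index `≥ k`) lies in `⟨σ, τ⟩`. -/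
theorem stmt_3 (k : ℕ) (hk : 2 ≤ k) (hkeven : Even k)
    (σ τ : Equiv.Perm (Fin (2 * k - 1)))
    (hσ : σ = ((List.finRange (2 * k - 1)).take k).formPerm)
    (hτ : τ = ((List.finRange (2 * k - 1)).drop (k - 1)).formPerm)
    (ρ : Equiv.Perm (Fin (2 * k - 1))) (hρ : ∀ x : Fin (2 * k - 1), k ≤ x.val → ρ x = x) :
    ρ ∈ Subgroup.closure {σ, τ} := by
  have hσ' : σ = s3σ k := hσ
  have hτ' : τ = s3τ k := hτ
  subst hσ' hτ'
  have key : ∀ x : Fin (2*k-1), x.val < k → (ρ x).val < k := by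
    intro x hx
    by_contra hge
    push_neg at hge
    have h1 := hρ (ρ x) hge
    have h2 : ρ x = x := ρ.injective h1
    omega
  have key' : ∀ x : Fin (2*k-1), x.val < k → (ρ⁻¹ x).val < k := by
    intro x hx
    by_contra hge
    push_neg at hge
    have h1 := hρ (ρ⁻¹ x) hge
    have h2 : ρ (ρ⁻¹ x) = x := ρ.apply_symm_apply x
    have h2' : ρ⁻¹ x = x := h1.symm.trans h2
    rw [h2'] at hge
    omega
  have hkle : k ≤ 2*k-1 := by omega
  set e := Fin.castLEEmb hkle with he
  let g : Equiv.Perm (Fin k) := {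
    toFun := fun a => ⟨(ρ (Fin.castLE hkle a)).val, key _ (by simpa using a.isLt)⟩
    invFun := fun a => ⟨(ρ⁻¹ (Fin.castLE hkle a)).val, key' _ (by simpa using a.isLt)⟩
    left_inv := by
      intro a
      apply Fin.ext
      have hc : Fin.castLE hkle ⟨(ρ (Fin.castLE hkle a)).val, by
          exact key _ (by simpa using a.isLt)⟩ = ρ (Fin.castLE hkle a) := by
        apply Fin.ext; rfl
      show (ρ⁻¹ (Fin.castLE hkle _)).val = a.val
      rw [hc, Equiv.Perm.inv_def, Equiv.symm_apply_apply]
      rfl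
    right_inv := by
      intro a
      apply Fin.ext
      have hc : Fin.castLE hkle ⟨(ρ⁻¹ (Fin.castLE hkle a)).val, by
          exact key' _ (by simpa using a.isLt)⟩ = ρ⁻¹ (Fin.castLE hkle a) := by
        apply Fin.ext; rfl
      show (ρ (Fin.castLE hkle _)).val = a.val
      rw [hc, Equiv.Perm.inv_def, Equiv.apply_symm_apply]
      rfl }
  have hg : g.viaEmbedding e = ρ := by
    ext z
    by_cases hz : z ∈ Set.range e
    · obtain ⟨a, rfl⟩ := hz
      rw [Equiv.Perm.viaEmbedding_apply]
      rfl
    · rw [Equiv.Perm.viaEmbedding_apply_of_notMem _ _ _ hz]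
      have hzk : k ≤ z.val := by
        by_contra hlt
        push_neg at hlt
        exact hz ⟨⟨z.val, hlt⟩, Fin.ext rfl⟩
      exact congrArg Fin.val (hρ z hzk).symm
  rw [← hg, he]
  exact s3_mem_via k hk hkeven g
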